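/- The congruence lattices L = {(a, b, c) ∈ ℤ³ : a + 2b + 6c ≡ 0 (mod 15)} and L' = {(a, b, c) ∈ ℤ³ : a + 3b + 4c ≡ 0 (mod 15)} are one-norm isospectral: for every integer k ≥ 0, #{(a, b, c) ∈ L : |a| + |b| + |c| = k} = #{(a, b, c) ∈ L' : |a| + |b| + |c| = k}. -/

import Mathlib

set_option maxRecDepth 1000000

namespace IsoLens

abbrev nrm (p : ℤ × ℤ × ℤ) : ℕ := p.1.natAbs + p.2.1.natAbs + p.2.2.natAbs

lemma finite_norm (Q : ℤ × ℤ × ℤ → Prop) (n : ℕ) :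
    {p : ℤ × ℤ × ℤ | Q p ∧ nrm p = n}.Finite := by
  apply Set.Finite.subset
    ((Finset.Icc (-(n:ℤ)) n ×ˢ Finset.Icc (-(n:ℤ)) n ×ˢ Finset.Icc (-(n:ℤ)) n) :
      Finset (ℤ × ℤ × ℤ)).finite_toSet
  rintro ⟨a, b, c⟩ ⟨-, hn⟩
  simp only [nrm] at hn
  simp only [Finset.coe_product, Set.mem_prod, Finset.mem_coe, Finset.mem_Icc]
  omega

lemma shift1 (Q : ℤ × ℤ × ℤ → Prop) (hQ : ∀ a b c, Q (a + 15, b, c) ↔ Q (a, b, c)) (n : ℕ) :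
    Set.ncard {p : ℤ × ℤ × ℤ | Q p ∧ nrm p = n + 15} =
      Set.ncard {p : ℤ × ℤ × ℤ | Q p ∧ nrm p = n} +
      Set.ncard {p : ℤ × ℤ × ℤ | (Q p ∧ nrm p = n + 15) ∧ (-15 ≤ p.1 ∧ p.1 < 15)} := by
  have hQ' : ∀ a b c, Q (a - 15, b, c) ↔ Q (a, b, c) := by
    intro a b c
    have h := hQ (a - 15) b c
    rw [sub_add_cancel] at h
    exact h.symm
  set φ : ℤ × ℤ × ℤ → ℤ × ℤ × ℤ :=
    fun p => (p.1 + if 0 ≤ p.1 then 15 else -15, p.2.1, p.2.2) with hφ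
  have hinj : Function.Injective φ := by
    rintro ⟨a, b, c⟩ ⟨x, y, z⟩ h
    simp only [hφ, Prod.mk.injEq] at h
    obtain ⟨h1, h2, h3⟩ := h
    split_ifs at h1 <;> simp_all <;> omega
  have himg : φ '' {p | Q p ∧ nrm p = n} =
      {p : ℤ × ℤ × ℤ | (Q p ∧ nrm p = n + 15) ∧ (15 ≤ p.1 ∨ p.1 ≤ -16)} := by
    ext ⟨a, b, c⟩
    simp only [Set.mem_image, Set.mem_setOf_eq]
    constructor
    · rintro ⟨⟨x, y, z⟩, ⟨hq, hn⟩, heq⟩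
      simp only [hφ, Prod.mk.injEq] at heq
      obtain ⟨h1, h2, h3⟩ := heq
      subst h1; subst h2; subst h3
      split_ifs with hx
      · exact ⟨⟨(hQ x y z).mpr hq, by simp only [nrm] at hn ⊢; omega⟩, by omega⟩
      · refine ⟨⟨?_, by simp only [nrm] at hn ⊢; omega⟩, by omega⟩
        rw [show x + -15 = x - 15 by ring]
        exact (hQ' x y z).mpr hq
    · rintro ⟨⟨hq, hn⟩, hr⟩
      simp only [nrm] at hn
      rcases hr with hr | hr
      · refine ⟨(a - 15, b, c), ⟨(hQ' a b c).mpr hq, by simp only [nrm]; omega⟩, ?_⟩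
        have hv : a - 15 + (if (0:ℤ) ≤ a - 15 then 15 else -15) = a := by
          rw [if_pos (by omega : (0:ℤ) ≤ a - 15)]; ring
        simp only [hφ, hv]
      · refine ⟨(a + 15, b, c), ⟨(hQ a b c).mpr hq, by simp only [nrm]; omega⟩, ?_⟩
        have hv : a + 15 + (if (0:ℤ) ≤ a + 15 then 15 else -15) = a := by
          rw [if_neg (by omega : ¬ (0:ℤ) ≤ a + 15)]; ring
        simp only [hφ, hv]
  have hdecomp : {p : ℤ × ℤ × ℤ | Q p ∧ nrm p = n + 15} =
      {p : ℤ × ℤ × ℤ | (Q p ∧ nrm p = n + 15) ∧ (15 ≤ p.1 ∨ p.1 ≤ -16)} ∪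
      {p : ℤ × ℤ × ℤ | (Q p ∧ nrm p = n + 15) ∧ (-15 ≤ p.1 ∧ p.1 < 15)} := by
    ext p
    simp only [Set.mem_union, Set.mem_setOf_eq]
    constructor
    · intro h
      by_cases h15 : 15 ≤ p.1 ∨ p.1 ≤ -16
      · exact Or.inl ⟨h, h15⟩
      · exact Or.inr ⟨h, by omega⟩
    · rintro (⟨h, -⟩ | ⟨h, -⟩) <;> exact h
  rw [hdecomp, Set.ncard_union_eq ?_ ?_ ?_, ← himg, Set.ncard_image_of_injective _ hinj]
  · rw [Set.disjoint_left]
    rintro p ⟨-, h1⟩ ⟨-, h2⟩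
    omega
  · exact (finite_norm Q (n + 15)).subset (fun p hp => hp.1)
  · exact (finite_norm Q (n + 15)).subset (fun p hp => hp.1)


lemma shift2 (Q : ℤ × ℤ × ℤ → Prop) (hQ : ∀ a b c, Q (a, b + 15, c) ↔ Q (a, b, c)) (n : ℕ) :
    Set.ncard {p : ℤ × ℤ × ℤ | Q p ∧ nrm p = n + 15} =
      Set.ncard {p : ℤ × ℤ × ℤ | Q p ∧ nrm p = n} +
      Set.ncard {p : ℤ × ℤ × ℤ | (Q p ∧ nrm p = n + 15) ∧ (-15 ≤ p.2.1 ∧ p.2.1 < 15)} := by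
  have hQ' : ∀ a b c, Q (a, b - 15, c) ↔ Q (a, b, c) := by
    intro a b c
    have h := hQ a (b - 15) c
    rw [sub_add_cancel] at h
    exact h.symm
  set φ : ℤ × ℤ × ℤ → ℤ × ℤ × ℤ :=
    fun p => (p.1, p.2.1 + if 0 ≤ p.2.1 then 15 else -15, p.2.2) with hφ
  have hinj : Function.Injective φ := by
    rintro ⟨a, b, c⟩ ⟨x, y, z⟩ h
    simp only [hφ, Prod.mk.injEq] at h
    obtain ⟨h1, h2, h3⟩ := h
    split_ifs at h2 <;> simp_all <;> omega
  have himg : φ '' {p | Q p ∧ nrm p = n} =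
      {p : ℤ × ℤ × ℤ | (Q p ∧ nrm p = n + 15) ∧ (15 ≤ p.2.1 ∨ p.2.1 ≤ -16)} := by
    ext ⟨a, b, c⟩
    simp only [Set.mem_image, Set.mem_setOf_eq]
    constructor
    · rintro ⟨⟨x, y, z⟩, ⟨hq, hn⟩, heq⟩
      simp only [hφ, Prod.mk.injEq] at heq
      obtain ⟨h1, h2, h3⟩ := heq
      subst h1; subst h2; subst h3
      split_ifs with hx
      · exact ⟨⟨(hQ x y z).mpr hq, by simp only [nrm] at hn ⊢; omega⟩, by omega⟩
      · refine ⟨⟨?_, by simp only [nrm] at hn ⊢; omega⟩, by omega⟩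
        rw [show y + -15 = y - 15 by ring]
        exact (hQ' x y z).mpr hq
    · rintro ⟨⟨hq, hn⟩, hr⟩
      simp only [nrm] at hn
      rcases hr with hr | hr
      · refine ⟨(a, b - 15, c), ⟨(hQ' a b c).mpr hq, by simp only [nrm]; omega⟩, ?_⟩
        have hv : b - 15 + (if (0:ℤ) ≤ b - 15 then 15 else -15) = b := by
          rw [if_pos (by omega : (0:ℤ) ≤ b - 15)]; ring
        simp only [hφ, hv]
      · refine ⟨(a, b + 15, c), ⟨(hQ a b c).mpr hq, by simp only [nrm]; omega⟩, ?_⟩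
        have hv : b + 15 + (if (0:ℤ) ≤ b + 15 then 15 else -15) = b := by
          rw [if_neg (by omega : ¬ (0:ℤ) ≤ b + 15)]; ring
        simp only [hφ, hv]
  have hdecomp : {p : ℤ × ℤ × ℤ | Q p ∧ nrm p = n + 15} =
      {p : ℤ × ℤ × ℤ | (Q p ∧ nrm p = n + 15) ∧ (15 ≤ p.2.1 ∨ p.2.1 ≤ -16)} ∪
      {p : ℤ × ℤ × ℤ | (Q p ∧ nrm p = n + 15) ∧ (-15 ≤ p.2.1 ∧ p.2.1 < 15)} := by
    ext p
    simp only [Set.mem_union, Set.mem_setOf_eq]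
    constructor
    · intro h
      by_cases h15 : 15 ≤ p.2.1 ∨ p.2.1 ≤ -16
      · exact Or.inl ⟨h, h15⟩
      · exact Or.inr ⟨h, by omega⟩
    · rintro (⟨h, -⟩ | ⟨h, -⟩) <;> exact h
  rw [hdecomp, Set.ncard_union_eq ?_ ?_ ?_, ← himg, Set.ncard_image_of_injective _ hinj]
  · rw [Set.disjoint_left]
    rintro p ⟨-, h1⟩ ⟨-, h2⟩
    omega
  · exact (finite_norm Q (n + 15)).subset (fun p hp => hp.1)
  · exact (finite_norm Q (n + 15)).subset (fun p hp => hp.1)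

lemma shift3 (Q : ℤ × ℤ × ℤ → Prop) (hQ : ∀ a b c, Q (a, b, c + 15) ↔ Q (a, b, c)) (n : ℕ) :
    Set.ncard {p : ℤ × ℤ × ℤ | Q p ∧ nrm p = n + 15} =
      Set.ncard {p : ℤ × ℤ × ℤ | Q p ∧ nrm p = n} +
      Set.ncard {p : ℤ × ℤ × ℤ | (Q p ∧ nrm p = n + 15) ∧ (-15 ≤ p.2.2 ∧ p.2.2 < 15)} := by
  have hQ' : ∀ a b c, Q (a, b, c - 15) ↔ Q (a, b, c) := by
    intro a b c
    have h := hQ a b (c - 15)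
    rw [sub_add_cancel] at h
    exact h.symm
  set φ : ℤ × ℤ × ℤ → ℤ × ℤ × ℤ :=
    fun p => (p.1, p.2.1, p.2.2 + if 0 ≤ p.2.2 then 15 else -15) with hφ
  have hinj : Function.Injective φ := by
    rintro ⟨a, b, c⟩ ⟨x, y, z⟩ h
    simp only [hφ, Prod.mk.injEq] at h
    obtain ⟨h1, h2, h3⟩ := h
    split_ifs at h3 <;> simp_all <;> omega
  have himg : φ '' {p | Q p ∧ nrm p = n} =
      {p : ℤ × ℤ × ℤ | (Q p ∧ nrm p = n + 15) ∧ (15 ≤ p.2.2 ∨ p.2.2 ≤ -16)} := by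
    ext ⟨a, b, c⟩
    simp only [Set.mem_image, Set.mem_setOf_eq]
    constructor
    · rintro ⟨⟨x, y, z⟩, ⟨hq, hn⟩, heq⟩
      simp only [hφ, Prod.mk.injEq] at heq
      obtain ⟨h1, h2, h3⟩ := heq
      subst h1; subst h2; subst h3
      split_ifs with hx
      · exact ⟨⟨(hQ x y z).mpr hq, by simp only [nrm] at hn ⊢; omega⟩, by omega⟩
      · refine ⟨⟨?_, by simp only [nrm] at hn ⊢; omega⟩, by omega⟩
        rw [show z + -15 = z - 15 by ring]
        exact (hQ' x y z).mpr hq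
    · rintro ⟨⟨hq, hn⟩, hr⟩
      simp only [nrm] at hn
      rcases hr with hr | hr
      · refine ⟨(a, b, c - 15), ⟨(hQ' a b c).mpr hq, by simp only [nrm]; omega⟩, ?_⟩
        have hv : c - 15 + (if (0:ℤ) ≤ c - 15 then 15 else -15) = c := by
          rw [if_pos (by omega : (0:ℤ) ≤ c - 15)]; ring
        simp only [hφ, hv]
      · refine ⟨(a, b, c + 15), ⟨(hQ a b c).mpr hq, by simp only [nrm]; omega⟩, ?_⟩
        have hv : c + 15 + (if (0:ℤ) ≤ c + 15 then 15 else -15) = c := by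
          rw [if_neg (by omega : ¬ (0:ℤ) ≤ c + 15)]; ring
        simp only [hφ, hv]
  have hdecomp : {p : ℤ × ℤ × ℤ | Q p ∧ nrm p = n + 15} =
      {p : ℤ × ℤ × ℤ | (Q p ∧ nrm p = n + 15) ∧ (15 ≤ p.2.2 ∨ p.2.2 ≤ -16)} ∪
      {p : ℤ × ℤ × ℤ | (Q p ∧ nrm p = n + 15) ∧ (-15 ≤ p.2.2 ∧ p.2.2 < 15)} := by
    ext p
    simp only [Set.mem_union, Set.mem_setOf_eq]
    constructor
    · intro h
      by_cases h15 : 15 ≤ p.2.2 ∨ p.2.2 ≤ -16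
      · exact Or.inl ⟨h, h15⟩
      · exact Or.inr ⟨h, by omega⟩
    · rintro (⟨h, -⟩ | ⟨h, -⟩) <;> exact h
  rw [hdecomp, Set.ncard_union_eq ?_ ?_ ?_, ← himg, Set.ncard_image_of_injective _ hinj]
  · rw [Set.disjoint_left]
    rintro p ⟨-, h1⟩ ⟨-, h2⟩
    omega
  · exact (finite_norm Q (n + 15)).subset (fun p hp => hp.1)
  · exact (finite_norm Q (n + 15)).subset (fun p hp => hp.1)



def Q1 (s t : ℤ) (p : ℤ × ℤ × ℤ) : Prop := (15 : ℤ) ∣ (p.1 + s * p.2.1 + t * p.2.2)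
def Q2 (s t : ℤ) (p : ℤ × ℤ × ℤ) : Prop := Q1 s t p ∧ (-15 ≤ p.1 ∧ p.1 < 15)
def Q3 (s t : ℤ) (p : ℤ × ℤ × ℤ) : Prop := Q2 s t p ∧ (-15 ≤ p.2.1 ∧ p.2.1 < 15)
instance (s t : ℤ) : DecidablePred (Q1 s t) := fun p => by unfold Q1; infer_instance
instance (s t : ℤ) : DecidablePred (Q2 s t) := fun p => by unfold Q2; infer_instance
instance (s t : ℤ) : DecidablePred (Q3 s t) := fun p => by unfold Q3; infer_instance

lemma hQ1 (s t : ℤ) : ∀ a b c : ℤ, Q1 s t (a + 15, b, c) ↔ Q1 s t (a, b, c) := by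
  intro a b c
  simp only [Q1]
  rw [show a + 15 + s * b + t * c = 15 * 1 + (a + s * b + t * c) by ring]
  exact dvd_add_right (Dvd.intro 1 rfl)

lemma hQ2 (s t : ℤ) : ∀ a b c : ℤ, Q2 s t (a, b + 15, c) ↔ Q2 s t (a, b, c) := by
  intro a b c
  simp only [Q2, Q1]
  rw [show a + s * (b + 15) + t * c = 15 * s + (a + s * b + t * c) by ring]
  exact and_congr (dvd_add_right (Dvd.intro s rfl)) Iff.rfl

lemma hQ3 (s t : ℤ) : ∀ a b c : ℤ, Q3 s t (a, b, c + 15) ↔ Q3 s t (a, b, c) := by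
  intro a b c
  simp only [Q3, Q2, Q1]
  rw [show a + s * b + t * (c + 15) = 15 * t + (a + s * b + t * c) by ring]
  exact and_congr (and_congr (dvd_add_right (Dvd.intro t rfl)) Iff.rfl) Iff.rfl

noncomputable def Fc (s t : ℤ) (n : ℕ) : ℕ := Set.ncard {p : ℤ × ℤ × ℤ | Q1 s t p ∧ nrm p = n}
noncomputable def Bc (s t : ℤ) (n : ℕ) : ℕ := Set.ncard {p : ℤ × ℤ × ℤ | Q2 s t p ∧ nrm p = n}
noncomputable def Cc (s t : ℤ) (n : ℕ) : ℕ := Set.ncard {p : ℤ × ℤ × ℤ | Q3 s t p ∧ nrm p = n}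

lemma Frec (s t : ℤ) (n : ℕ) : Fc s t (n + 15) = Fc s t n + Bc s t (n + 15) := by
  have h := shift1 (Q1 s t) (hQ1 s t) n
  have e : {p : ℤ × ℤ × ℤ | (Q1 s t p ∧ nrm p = n + 15) ∧ (-15 ≤ p.1 ∧ p.1 < 15)}
      = {p : ℤ × ℤ × ℤ | Q2 s t p ∧ nrm p = n + 15} := by
    ext p
    simp only [Set.mem_setOf_eq, Q2]
    tauto
  rw [e] at h
  exact h

lemma Brec (s t : ℤ) (n : ℕ) : Bc s t (n + 15) = Bc s t n + Cc s t (n + 15) := by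
  have h := shift2 (Q2 s t) (hQ2 s t) n
  have e : {p : ℤ × ℤ × ℤ | (Q2 s t p ∧ nrm p = n + 15) ∧ (-15 ≤ p.2.1 ∧ p.2.1 < 15)}
      = {p : ℤ × ℤ × ℤ | Q3 s t p ∧ nrm p = n + 15} := by
    ext p
    simp only [Set.mem_setOf_eq, Q3]
    tauto
  rw [e] at h
  exact h

lemma Crec (s t : ℤ) (n : ℕ) (hn : 31 ≤ n) : Cc s t (n + 15) = Cc s t n := by
  have h := shift3 (Q3 s t) (hQ3 s t) n
  have e : {p : ℤ × ℤ × ℤ | (Q3 s t p ∧ nrm p = n + 15) ∧ (-15 ≤ p.2.2 ∧ p.2.2 < 15)}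
      = (∅ : Set (ℤ × ℤ × ℤ)) := by
    ext ⟨a, b, c⟩
    simp only [Set.mem_setOf_eq, Set.mem_empty_iff_false, iff_false]
    rintro ⟨⟨⟨⟨-, ha⟩, hb⟩, hnn⟩, hc⟩
    simp only [nrm] at hnn
    dsimp only at ha hb hc hnn
    omega
  rw [e, Set.ncard_empty] at h
  simpa [Cc] using h

def cval (n : ℕ) (a b : ℤ) (i : ℕ) : ℤ :=
  if i = 0 then ((n - a.natAbs - b.natAbs : ℕ) : ℤ) else -((n - a.natAbs - b.natAbs : ℕ) : ℤ)

def tgt (Q : ℤ × ℤ × ℤ → Prop) [DecidablePred Q] (n : ℕ) (A B : Finset ℤ) :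
    Finset (ℤ × ℤ × ℕ) :=
  (A ×ˢ B ×ˢ Finset.range 2).filter (fun q =>
    q.1.natAbs + q.2.1.natAbs ≤ n ∧ Q (q.1, q.2.1, cval n q.1 q.2.1 q.2.2) ∧
    (q.2.2 = 1 → q.1.natAbs + q.2.1.natAbs < n))

lemma ncard_eq_card (Q : ℤ × ℤ × ℤ → Prop) [DecidablePred Q] (n : ℕ) (A B : Finset ℤ)
    (hA : ∀ p : ℤ × ℤ × ℤ, Q p → nrm p = n → p.1 ∈ A ∧ p.2.1 ∈ B) :
    Set.ncard {p : ℤ × ℤ × ℤ | Q p ∧ nrm p = n} = (tgt Q n A B).card := by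
  have hset : {p : ℤ × ℤ × ℤ | Q p ∧ nrm p = n} =
      (((A ×ˢ B ×ˢ Finset.Icc (-(n:ℤ)) n).filter (fun p => Q p ∧ nrm p = n) :
        Finset (ℤ × ℤ × ℤ)) : Set (ℤ × ℤ × ℤ)) := by
    ext ⟨a, b, c⟩
    simp only [Set.mem_setOf_eq, Finset.coe_filter, Finset.mem_product, Finset.mem_Icc]
    constructor
    · rintro ⟨hq, hn⟩
      obtain ⟨h1, h2⟩ := hA (a, b, c) hq hn
      simp only [nrm] at hn
      exact ⟨⟨h1, h2, by omega⟩, hq, by simp only [nrm]; omega⟩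
    · rintro ⟨-, h⟩
      exact h
  rw [hset, Set.ncard_coe_finset]
  apply Finset.card_bij (fun p _ => (p.1, p.2.1, if 0 ≤ p.2.2 then 0 else 1))
  · rintro ⟨a, b, c⟩ hp
    simp only [Finset.mem_filter, Finset.mem_product, Finset.mem_Icc] at hp
    obtain ⟨⟨hmA, hmB, hc1, hc2⟩, hq, hn⟩ := hp
    simp only [nrm] at hn
    simp only [tgt, Finset.mem_filter, Finset.mem_product, Finset.mem_range]
    rcases le_or_gt 0 c with hc | hc
    · rw [if_pos hc]
      have hcv : cval n a b 0 = c := by unfold cval; rw [if_pos rfl]; omega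
      rw [hcv]
      exact ⟨⟨hmA, hmB, by omega⟩, by omega, hq, by intro h; omega⟩
    · rw [if_neg (by omega : ¬ (0:ℤ) ≤ c)]
      have hcv : cval n a b 1 = c := by unfold cval; rw [if_neg one_ne_zero]; omega
      rw [hcv]
      exact ⟨⟨hmA, hmB, by omega⟩, by omega, hq, by intro h; omega⟩
  · rintro ⟨a, b, c⟩ hp ⟨x, y, z⟩ hq h
    simp only [Finset.mem_filter, Finset.mem_product, Finset.mem_Icc, nrm] at hp hq
    simp only [Prod.mk.injEq] at h
    obtain ⟨h1, h2, h3⟩ := h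
    subst h1; subst h2
    have hcz : c = z := by split_ifs at h3 <;> omega
    rw [hcz]
  · rintro ⟨a, b, i⟩ hq
    simp only [tgt, Finset.mem_filter, Finset.mem_product, Finset.mem_range] at hq
    obtain ⟨⟨hmA, hmB, hi⟩, hle, hQc, hi1⟩ := hq
    refine ⟨(a, b, cval n a b i), ?_, ?_⟩
    · simp only [Finset.mem_filter, Finset.mem_product, Finset.mem_Icc]
      refine ⟨⟨hmA, hmB, ?_, ?_⟩, hQc, ?_⟩ <;>
        · simp only [cval, nrm]
          split_ifs <;> omega
    · have h : (if 0 ≤ cval n a b i then 0 else 1) = i := by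
        have hi' : i = 0 ∨ i = 1 := by omega
        rcases hi' with rfl | rfl
        · rw [if_pos]
          unfold cval
          rw [if_pos rfl]
          exact Int.natCast_nonneg _
        · have hneg : cval n a b 1 < 0 := by
            unfold cval
            rw [if_neg one_ne_zero]
            have := hi1 rfl
            omega
          rw [if_neg (by omega)]
      rw [h]



lemma Fc_card (s t : ℤ) (n : ℕ) :
    Fc s t n = (tgt (Q1 s t) n (Finset.Icc (-(n:ℤ)) n) (Finset.Icc (-(n:ℤ)) n)).card := by
  apply ncard_eq_card
  rintro ⟨a, b, c⟩ - hn
  simp only [nrm] at hn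
  simp only [Finset.mem_Icc]
  omega

lemma Bc_card (s t : ℤ) (n : ℕ) :
    Bc s t n = (tgt (Q2 s t) n (Finset.Icc (-15:ℤ) 15) (Finset.Icc (-(n:ℤ)) n)).card := by
  apply ncard_eq_card
  rintro ⟨a, b, c⟩ hq hn
  obtain ⟨-, ha⟩ := hq
  simp only [nrm] at hn
  simp only [Finset.mem_Icc]
  dsimp only at ha hn
  omega

lemma Cc_card (s t : ℤ) (n : ℕ) :
    Cc s t n = (tgt (Q3 s t) n (Finset.Icc (-15:ℤ) 15) (Finset.Icc (-15:ℤ) 15)).card := by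
  apply ncard_eq_card
  rintro ⟨a, b, c⟩ hq hn
  obtain ⟨⟨-, ha⟩, hb⟩ := hq
  simp only [Finset.mem_Icc]
  dsimp only at ha hb
  omega

lemma FB0 : Fc 2 6 0 = Fc 3 4 0 := by rw [Fc_card, Fc_card]; decide
lemma FB1 : Fc 2 6 1 = Fc 3 4 1 := by rw [Fc_card, Fc_card]; decide
lemma FB2 : Fc 2 6 2 = Fc 3 4 2 := by rw [Fc_card, Fc_card]; decide
lemma FB3 : Fc 2 6 3 = Fc 3 4 3 := by rw [Fc_card, Fc_card]; decide
lemma FB4 : Fc 2 6 4 = Fc 3 4 4 := by rw [Fc_card, Fc_card]; decide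
lemma FB5 : Fc 2 6 5 = Fc 3 4 5 := by rw [Fc_card, Fc_card]; decide
lemma FB6 : Fc 2 6 6 = Fc 3 4 6 := by rw [Fc_card, Fc_card]; decide
lemma FB7 : Fc 2 6 7 = Fc 3 4 7 := by rw [Fc_card, Fc_card]; decide
lemma FB8 : Fc 2 6 8 = Fc 3 4 8 := by rw [Fc_card, Fc_card]; decide
lemma FB9 : Fc 2 6 9 = Fc 3 4 9 := by rw [Fc_card, Fc_card]; decide
lemma FB10 : Fc 2 6 10 = Fc 3 4 10 := by rw [Fc_card, Fc_card]; decide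
lemma FB11 : Fc 2 6 11 = Fc 3 4 11 := by rw [Fc_card, Fc_card]; decide
lemma FB12 : Fc 2 6 12 = Fc 3 4 12 := by rw [Fc_card, Fc_card]; decide
lemma FB13 : Fc 2 6 13 = Fc 3 4 13 := by rw [Fc_card, Fc_card]; decide
lemma FB14 : Fc 2 6 14 = Fc 3 4 14 := by rw [Fc_card, Fc_card]; decide
lemma BB15 : Bc 2 6 15 = Bc 3 4 15 := by rw [Bc_card, Bc_card]; decide
lemma BB16 : Bc 2 6 16 = Bc 3 4 16 := by rw [Bc_card, Bc_card]; decide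
lemma BB17 : Bc 2 6 17 = Bc 3 4 17 := by rw [Bc_card, Bc_card]; decide
lemma BB18 : Bc 2 6 18 = Bc 3 4 18 := by rw [Bc_card, Bc_card]; decide
lemma BB19 : Bc 2 6 19 = Bc 3 4 19 := by rw [Bc_card, Bc_card]; decide
lemma BB20 : Bc 2 6 20 = Bc 3 4 20 := by rw [Bc_card, Bc_card]; decide
lemma BB21 : Bc 2 6 21 = Bc 3 4 21 := by rw [Bc_card, Bc_card]; decide
lemma BB22 : Bc 2 6 22 = Bc 3 4 22 := by rw [Bc_card, Bc_card]; decide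
lemma BB23 : Bc 2 6 23 = Bc 3 4 23 := by rw [Bc_card, Bc_card]; decide
lemma BB24 : Bc 2 6 24 = Bc 3 4 24 := by rw [Bc_card, Bc_card]; decide
lemma BB25 : Bc 2 6 25 = Bc 3 4 25 := by rw [Bc_card, Bc_card]; decide
lemma BB26 : Bc 2 6 26 = Bc 3 4 26 := by rw [Bc_card, Bc_card]; decide
lemma BB27 : Bc 2 6 27 = Bc 3 4 27 := by rw [Bc_card, Bc_card]; decide
lemma BB28 : Bc 2 6 28 = Bc 3 4 28 := by rw [Bc_card, Bc_card]; decide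
lemma BB29 : Bc 2 6 29 = Bc 3 4 29 := by rw [Bc_card, Bc_card]; decide
lemma CB30 : Cc 2 6 30 = Cc 3 4 30 := by rw [Cc_card, Cc_card]; decide
lemma CB31 : Cc 2 6 31 = Cc 3 4 31 := by rw [Cc_card, Cc_card]; decide
lemma CB32 : Cc 2 6 32 = Cc 3 4 32 := by rw [Cc_card, Cc_card]; decide
lemma CB33 : Cc 2 6 33 = Cc 3 4 33 := by rw [Cc_card, Cc_card]; decide
lemma CB34 : Cc 2 6 34 = Cc 3 4 34 := by rw [Cc_card, Cc_card]; decide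
lemma CB35 : Cc 2 6 35 = Cc 3 4 35 := by rw [Cc_card, Cc_card]; decide
lemma CB36 : Cc 2 6 36 = Cc 3 4 36 := by rw [Cc_card, Cc_card]; decide
lemma CB37 : Cc 2 6 37 = Cc 3 4 37 := by rw [Cc_card, Cc_card]; decide
lemma CB38 : Cc 2 6 38 = Cc 3 4 38 := by rw [Cc_card, Cc_card]; decide
lemma CB39 : Cc 2 6 39 = Cc 3 4 39 := by rw [Cc_card, Cc_card]; decide
lemma CB40 : Cc 2 6 40 = Cc 3 4 40 := by rw [Cc_card, Cc_card]; decide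
lemma CB41 : Cc 2 6 41 = Cc 3 4 41 := by rw [Cc_card, Cc_card]; decide
lemma CB42 : Cc 2 6 42 = Cc 3 4 42 := by rw [Cc_card, Cc_card]; decide
lemma CB43 : Cc 2 6 43 = Cc 3 4 43 := by rw [Cc_card, Cc_card]; decide
lemma CB44 : Cc 2 6 44 = Cc 3 4 44 := by rw [Cc_card, Cc_card]; decide
lemma CB45 : Cc 2 6 45 = Cc 3 4 45 := by rw [Cc_card, Cc_card]; decide


lemma Ceq (n : ℕ) : Cc 2 6 (n + 30) = Cc 3 4 (n + 30) := by
  induction n using Nat.strong_induction_on with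
  | _ n ih =>
    rcases lt_or_ge n 16 with h | h
    · interval_cases n
      exacts [CB30, CB31, CB32, CB33, CB34, CB35, CB36, CB37, CB38, CB39, CB40, CB41, CB42, CB43, CB44, CB45]
    · obtain ⟨m, rfl⟩ : ∃ m, n = m + 16 := ⟨n - 16, by omega⟩
      rw [show m + 16 + 30 = m + 31 + 15 from by omega, Crec 2 6 (m + 31) (by omega),
        Crec 3 4 (m + 31) (by omega), show m + 31 = m + 1 + 30 from by omega]
      exact ih (m + 1) (by omega)

lemma Beq (n : ℕ) : Bc 2 6 (n + 15) = Bc 3 4 (n + 15) := by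
  induction n using Nat.strong_induction_on with
  | _ n ih =>
    rcases lt_or_ge n 15 with h | h
    · interval_cases n
      exacts [BB15, BB16, BB17, BB18, BB19, BB20, BB21, BB22, BB23, BB24, BB25, BB26, BB27, BB28, BB29]
    · obtain ⟨m, rfl⟩ : ∃ m, n = m + 15 := ⟨n - 15, by omega⟩
      rw [show m + 15 + 15 = (m + 15) + 15 from rfl, Brec 2 6 (m + 15), Brec 3 4 (m + 15),
        ih m (by omega), show m + 15 + 15 = m + 30 from by omega, Ceq m]

lemma Feq (n : ℕ) : Fc 2 6 n = Fc 3 4 n := by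
  induction n using Nat.strong_induction_on with
  | _ n ih =>
    rcases lt_or_ge n 15 with h | h
    · interval_cases n
      exacts [FB0, FB1, FB2, FB3, FB4, FB5, FB6, FB7, FB8, FB9, FB10, FB11, FB12, FB13, FB14]
    · obtain ⟨m, rfl⟩ : ∃ m, n = m + 15 := ⟨n - 15, by omega⟩
      rw [Frec 2 6 m, Frec 3 4 m, ih m (by omega), Beq m]

end IsoLens

/-- **The isospectral pair of 5-dimensional orbifold lens spaces `L(15;1,2,6)`, `L(15;1,3,4)`.**
The congruence lattices `{(a,b,c) ∈ ℤ³ : a + 2b + 6c ≡ 0 (mod 15)}` and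
`{(a,b,c) ∈ ℤ³ : a + 3b + 4c ≡ 0 (mod 15)}` are one-norm isospectral: they have the same
number of elements of one-norm `k` for every `k ≥ 0`. -/
theorem one_norm_isospectral_L15_126_134 :
    ∀ k : ℕ,
      Set.ncard {p : ℤ × ℤ × ℤ | (15 : ℤ) ∣ (p.1 + 2 * p.2.1 + 6 * p.2.2) ∧
          p.1.natAbs + p.2.1.natAbs + p.2.2.natAbs = k} =
      Set.ncard {p : ℤ × ℤ × ℤ | (15 : ℤ) ∣ (p.1 + 3 * p.2.1 + 4 * p.2.2) ∧
          p.1.natAbs + p.2.1.natAbs + p.2.2.natAbs = k} := by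
  intro k
  exact IsoLens.Feq k
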